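/- arXiv:1509.08547 — 3 statements merged into one kernel-verified Lean document; each statement's English description precedes it below -/
import Mathlib

section
/- Let K be a coronoid and let C_a, C_b be two distinct connected components of its complement. Then for any hexagons a ∈ C_a and b ∈ C_b, the hexagons a and b are connected by a path of adjacent hexagons all lying in K ∪ C_a ∪ C_b. -/
/-- Hexagons of the infinite hexagonal grid, indexed by integer pairs. -/
abbrev Hexa := ℤ × ℤ

/-- Two hexagons of the grid are adjacent (share an edge). -/
def HexAdj (a b : Hexa) : Prop :=
  (b.1 - a.1, b.2 - a.2) ∈
    ({(1,0), (-1,0), (0,1), (1,1), (0,-1), (-1,-1)} : Set (ℤ × ℤ))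

/-- `a` and `b` are joined by a path of pairwise-adjacent hexagons all lying in `K`. -/
def ReachIn (K : Set Hexa) (a b : Hexa) : Prop :=
  a ∈ K ∧ b ∈ K ∧
    Relation.ReflTransGen (fun x y => HexAdj x y ∧ x ∈ K ∧ y ∈ K) a b

/-- A hexagonal system is connected if any two of its hexagons are joined inside it. -/
def IsConnectedSys (K : Set Hexa) : Prop := ∀ a ∈ K, ∀ b ∈ K, ReachIn K a b

/-- `C` is a connected component of the hexagonal system `K`. -/
def IsComponent (K C : Set Hexa) : Prop := ∃ a ∈ K, C = {b | ReachIn K a b}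

/-- A coronoid is a finite connected (nonempty) hexagonal system. -/
def IsCoronoid (K : Set Hexa) : Prop := K.Finite ∧ K.Nonempty ∧ IsConnectedSys K

/-- A benzenoid is a coronoid whose complement is connected. -/
def IsBenzenoid (K : Set Hexa) : Prop := IsCoronoid K ∧ IsConnectedSys Kᶜ

lemma hexAdj_symm : Symmetric HexAdj := by
  intro a b h
  simp only [HexAdj, Set.mem_insert_iff, Set.mem_singleton_iff, Prod.mk.injEq] at h ⊢
  omega

lemma adj_right (x : Hexa) : HexAdj x (x.1 + 1, x.2) := by
  simp only [HexAdj, Set.mem_insert_iff, Set.mem_singleton_iff, Prod.mk.injEq]; omega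

lemma adj_left (x : Hexa) : HexAdj x (x.1 - 1, x.2) := by
  simp only [HexAdj, Set.mem_insert_iff, Set.mem_singleton_iff, Prod.mk.injEq]; omega

lemma adj_up (x : Hexa) : HexAdj x (x.1, x.2 + 1) := by
  simp only [HexAdj, Set.mem_insert_iff, Set.mem_singleton_iff, Prod.mk.injEq]; omega

lemma adj_down (x : Hexa) : HexAdj x (x.1, x.2 - 1) := by
  simp only [HexAdj, Set.mem_insert_iff, Set.mem_singleton_iff, Prod.mk.injEq]; omega

lemma reach_horiz (x y : ℤ) (n : ℤ) :
    Relation.ReflTransGen HexAdj (x, y) (x + n, y) := by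
  induction n using Int.induction_on with
  | zero => simpa using Relation.ReflTransGen.refl
  | succ n ih =>
      refine ih.tail ?_
      have := adj_right (x + n, y)
      simpa [add_assoc] using this
  | pred n ih =>
      refine ih.tail ?_
      have := adj_left (x + -n, y)
      have e : HexAdj (x + -n, y) ((x + -n) - 1, y) := this
      convert e using 2
      push_cast
      ring

lemma reach_vert (x y : ℤ) (n : ℤ) :
    Relation.ReflTransGen HexAdj (x, y) (x, y + n) := by
  induction n using Int.induction_on with
  | zero => simpa using Relation.ReflTransGen.refl
  | succ n ih =>
      refine ih.tail ?_
      have := adj_up (x, y + n)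
      simpa [add_assoc] using this
  | pred n ih =>
      refine ih.tail ?_
      have := adj_down (x, y + -n)
      have e : HexAdj (x, y + -n) (x, (y + -n) - 1) := this
      convert e using 2
      push_cast
      ring

lemma grid_reach (a b : Hexa) : Relation.ReflTransGen HexAdj a b := by
  have h1 : Relation.ReflTransGen HexAdj (a.1, a.2) (a.1 + (b.1 - a.1), a.2) :=
    reach_horiz a.1 a.2 (b.1 - a.1)
  have h2 : Relation.ReflTransGen HexAdj (b.1, a.2) (b.1, a.2 + (b.2 - a.2)) :=
    reach_vert b.1 a.2 (b.2 - a.2)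
  have e1 : a.1 + (b.1 - a.1) = b.1 := by ring
  have e2 : a.2 + (b.2 - a.2) = b.2 := by ring
  rw [e1] at h1; rw [e2] at h2
  exact Relation.ReflTransGen.trans (by simpa using h1) (by simpa using h2)

/-- First-entry lemma: a path from `a ∈ Kᶜ` to anywhere either stays in `Kᶜ`
or finds a hexagon of `Kᶜ` (reachable from `a` inside `Kᶜ`) adjacent to `K`. -/
lemma entry (K : Set Hexa) (a z : Hexa) (ha : a ∈ Kᶜ)
    (h : Relation.ReflTransGen HexAdj a z) :
    (z ∈ Kᶜ ∧ Relation.ReflTransGen (fun x y => HexAdj x y ∧ x ∈ Kᶜ ∧ y ∈ Kᶜ) a z)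
    ∨ ∃ k ∈ K, ∃ c ∈ Kᶜ, HexAdj c k ∧
        Relation.ReflTransGen (fun x y => HexAdj x y ∧ x ∈ Kᶜ ∧ y ∈ Kᶜ) a c := by
  induction h with
  | refl => exact Or.inl ⟨ha, Relation.ReflTransGen.refl⟩
  | @tail m z hp hadj ih =>
      rcases ih with ⟨hm, hpath⟩ | hr
      · by_cases hz : z ∈ K
        · exact Or.inr ⟨z, hz, m, hm, hadj, hpath⟩
        · exact Or.inl ⟨hz, hpath.tail ⟨hadj, hm, hz⟩⟩
      · exact Or.inr hr

/-- If `C` is a component of `Kᶜ` containing `a`, then any `Kᶜ`-path from `a`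
lies wholly in `C`, hence lifts to any superset `S ⊇ C`. -/
lemma lift_path (K C S : Set Hexa) (hC : IsComponent Kᶜ C) (hCS : C ⊆ S)
    (a c : Hexa) (ha : a ∈ C)
    (h : Relation.ReflTransGen (fun x y => HexAdj x y ∧ x ∈ Kᶜ ∧ y ∈ Kᶜ) a c) :
    c ∈ C ∧ Relation.ReflTransGen (fun x y => HexAdj x y ∧ x ∈ S ∧ y ∈ S) a c := by
  obtain ⟨a0, ha0, rfl⟩ := hC
  induction h with
  | refl => exact ⟨ha, Relation.ReflTransGen.refl⟩
  | @tail m z hp hstep ih =>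
      obtain ⟨hm, hpath⟩ := ih
      obtain ⟨hadj, hmK, hzK⟩ := hstep
      have hmem : z ∈ {b | ReachIn Kᶜ a0 b} := by
        obtain ⟨h1, h2, h3⟩ := hm
        exact ⟨h1, hzK, h3.tail ⟨hadj, hmK, hzK⟩⟩
      exact ⟨hmem, hpath.tail ⟨hadj, hCS hm, hCS hmem⟩⟩

/-- each component of the complement of a nonempty `K` has a hexagon adjacent to `K`,
reachable inside the component. -/
lemma component_touches (K C S : Set Hexa) (hKne : K.Nonempty)
    (hC : IsComponent Kᶜ C) (hCS : C ⊆ S) (a : Hexa) (ha : a ∈ C) :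
    ∃ k ∈ K, ∃ c ∈ C, HexAdj c k ∧
      Relation.ReflTransGen (fun x y => HexAdj x y ∧ x ∈ S ∧ y ∈ S) a c := by
  obtain ⟨k0, hk0⟩ := hKne
  have haK : a ∈ Kᶜ := by
    obtain ⟨a0, ha0, rfl⟩ := hC
    exact ha.2.1
  rcases entry K a k0 haK (grid_reach a k0) with ⟨hk, _⟩ | ⟨k, hk, c, hcK, hadj, hpath⟩
  · exact absurd hk0 hk
  · obtain ⟨hcC, hSpath⟩ := lift_path K C S hC hCS a c ha hpath
    exact ⟨k, hk, c, hcC, hadj, hSpath⟩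

/-- hexagons of two distinct components `Ca`, `Cb` of the complement of a
coronoid `K` are joined by a path of adjacent hexagons inside `K ∪ Ca ∪ Cb`. -/
theorem stmt5 (K : Set Hexa) (hK : IsCoronoid K) (Ca Cb : Set Hexa)
    (hCa : IsComponent Kᶜ Ca) (hCb : IsComponent Kᶜ Cb) (hne : Ca ≠ Cb)
    (a : Hexa) (ha : a ∈ Ca) (b : Hexa) (hb : b ∈ Cb) :
    ReachIn (K ∪ Ca ∪ Cb) a b := by
  obtain ⟨hfin, hKne, hconn⟩ := hK
  set S := K ∪ Ca ∪ Cb with hS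
  have hKS : K ⊆ S := fun x hx => Or.inl (Or.inl hx)
  have hCaS : Ca ⊆ S := fun x hx => Or.inl (Or.inr hx)
  have hCbS : Cb ⊆ S := fun x hx => Or.inr hx
  obtain ⟨k, hk, c, hcCa, hadjc, hpa⟩ := component_touches K Ca S hKne hCa hCaS a ha
  obtain ⟨k', hk', c', hcCb, hadjc', hpb⟩ := component_touches K Cb S hKne hCb hCbS b hb
  -- path k →* k' inside K, lifted to S
  obtain ⟨_, _, hkk'⟩ := hconn k hk k' hk'
  have hkk'S : Relation.ReflTransGen (fun x y => HexAdj x y ∧ x ∈ S ∧ y ∈ S) k k' :=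
    Relation.ReflTransGen.mono (r := fun x y => HexAdj x y ∧ x ∈ K ∧ y ∈ K)
      (p := fun x y => HexAdj x y ∧ x ∈ S ∧ y ∈ S)
      (fun x y ⟨h1, h2, h3⟩ => ⟨h1, hKS h2, hKS h3⟩) _ _ hkk'
  -- reverse the b-side path
  have hsymm : Symmetric (fun x y : Hexa => HexAdj x y ∧ x ∈ S ∧ y ∈ S) :=
    fun x y ⟨h1, h2, h3⟩ => ⟨hexAdj_symm h1, h3, h2⟩
  have hpb' : Relation.ReflTransGen (fun x y => HexAdj x y ∧ x ∈ S ∧ y ∈ S) c' b :=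
    by
      haveI : Std.Symm (fun x y : Hexa => HexAdj x y ∧ x ∈ S ∧ y ∈ S) := ⟨fun x y h => hsymm h⟩
      exact (Relation.ReflTransGen.symmetric (r := fun x y : Hexa => HexAdj x y ∧ x ∈ S ∧ y ∈ S)).symm _ _ hpb
  refine ⟨hCaS ha, hCbS hb, ?_⟩
  have step1 : Relation.ReflTransGen (fun x y => HexAdj x y ∧ x ∈ S ∧ y ∈ S) c k :=
    Relation.ReflTransGen.single ⟨hadjc, hCaS hcCa, hKS hk⟩
  have step2 : Relation.ReflTransGen (fun x y => HexAdj x y ∧ x ∈ S ∧ y ∈ S) k' c' :=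
    Relation.ReflTransGen.single ⟨hexAdj_symm hadjc', hKS hk', hCbS hcCb⟩
  exact hpa.trans (step1.trans (hkk'S.trans (step2.trans hpb')))
end

section
/- Let K be a coronoid with complement decomposition K^∁ = B_∞ ⊔ B_1 ⊔ ... ⊔ B_d where B_∞ is the unique infinite component. Then each finite component B_i (1 ≤ i ≤ d) is a benzenoid, i.e., B_i is finite, connected, and its complement B_i^∁ is connected; moreover B_∞^∁ is also a benzenoid. -/
/- ### Auxiliary machinery -/

/-- One step of a path inside `L`. -/
def Step (L : Set Hexa) (x y : Hexa) : Prop := HexAdj x y ∧ x ∈ L ∧ y ∈ L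

lemma reachIn_iff (L : Set Hexa) (a b : Hexa) :
    ReachIn L a b ↔ a ∈ L ∧ b ∈ L ∧ Relation.ReflTransGen (Step L) a b := Iff.rfl

lemma hexAdj_symm_s7 {a b : Hexa} (h : HexAdj a b) : HexAdj b a := by
  simp only [HexAdj, Set.mem_insert_iff, Set.mem_singleton_iff, Prod.mk.injEq] at *
  omega

lemma step_symm {L : Set Hexa} {x y : Hexa} (h : Step L x y) : Step L y x :=
  ⟨hexAdj_symm_s7 h.1, h.2.2, h.2.1⟩

lemma rtg_symm {L : Set Hexa} {a b : Hexa} (h : Relation.ReflTransGen (Step L) a b) :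
    Relation.ReflTransGen (Step L) b a := by
  induction h with
  | refl => exact .refl
  | tail _ h ih => exact .head (step_symm h) ih

lemma rtg_mono {L L' : Set Hexa} (hsub : L ⊆ L') {a b : Hexa}
    (h : Relation.ReflTransGen (Step L) a b) :
    Relation.ReflTransGen (Step L') a b :=
  by refine Relation.ReflTransGen.mono ?_ a b h; exact fun _ _ hs => ⟨hs.1, hsub hs.2.1, hsub hs.2.2⟩

lemma reach_symm {L : Set Hexa} {a b : Hexa} (h : ReachIn L a b) : ReachIn L b a :=
  ⟨h.2.1, h.1, rtg_symm h.2.2⟩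

lemma reach_trans {L : Set Hexa} {a b c : Hexa} (h : ReachIn L a b) (h' : ReachIn L b c) :
    ReachIn L a c :=
  ⟨h.1, h'.2.1, h.2.2.trans h'.2.2⟩

/-- Straight-line path lemma: repeating a legal direction `d` gives a path. -/
lemma line_path (L : Set Hexa) (d : Hexa)
    (hd : d ∈ ({(1,0), (-1,0), (0,1), (1,1), (0,-1), (-1,-1)} : Set (ℤ × ℤ)))
    (x : Hexa) :
    ∀ k : ℕ, (∀ i : ℕ, i ≤ k → ((x.1 + i * d.1, x.2 + i * d.2) : Hexa) ∈ L) →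
      Relation.ReflTransGen (Step L) x (x.1 + k * d.1, x.2 + k * d.2) := by
  intro k
  induction k with
  | zero =>
      intro _
      have : ((x.1 + (0:ℕ) * d.1, x.2 + (0:ℕ) * d.2) : Hexa) = x := by
        simp
      rw [this]
  | succ n ih =>
      intro h
      have hpath := ih (fun i hi => h i (Nat.le_succ_of_le hi))
      refine hpath.tail ?_
      refine ⟨?_, h n (Nat.le_succ n), h (n+1) le_rfl⟩
      have : ((x.1 + (↑(n+1)) * d.1 - (x.1 + (↑n) * d.1),
               x.2 + (↑(n+1)) * d.2 - (x.2 + (↑n) * d.2)) : ℤ × ℤ) = (d.1, d.2) := by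
        simp only [Prod.mk.injEq]
        push_cast
        constructor <;> ring
      show ((x.1 + (↑(n+1)) * d.1 - (x.1 + (↑n) * d.1),
         x.2 + (↑(n+1)) * d.2 - (x.2 + (↑n) * d.2)) : ℤ × ℤ) ∈ _
      rw [this]
      simpa using hd

/-- Points of the half-plane `{p | N < p.1}` are all joined within it. -/
lemma hp_connect (N : ℤ) {a b : Hexa} (ha : N < a.1) (hb : N < b.1) :
    Relation.ReflTransGen (Step {p : Hexa | N < p.1}) a b := by
  set M := max a.1 b.1 with hM
  -- horizontal move to x-coordinate M
  have horiz : ∀ c : Hexa, N < c.1 →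
      Relation.ReflTransGen (Step {p : Hexa | N < p.1}) c (M, c.2) := by
    intro c hc
    have hcM : c.1 ≤ M ∨ M ≤ c.1 := le_total _ _
    have hcle : c.1 ≤ M ∨ True := Or.inr trivial
    by_cases hle : c.1 ≤ M
    · have hk : ((M - c.1).toNat : ℤ) = M - c.1 := Int.toNat_of_nonneg (by omega)
      have := line_path {p : Hexa | N < p.1} (1,0) (by simp) c (M - c.1).toNat
        (fun i _ => by simp only [Set.mem_setOf_eq]; omega)
      have heq : ((c.1 + ((M - c.1).toNat : ℤ) * (1:ℤ), c.2 + ((M - c.1).toNat : ℤ) * (0:ℤ)) : Hexa)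
          = (M, c.2) := by
        rw [hk]; simp
      rwa [heq] at this
    · -- c.1 > M is impossible since M = max ≥ c.1 for c ∈ {a, b}; but prove generally:
      -- move with direction (-1,0)
      have hk : ((c.1 - M).toNat : ℤ) = c.1 - M := Int.toNat_of_nonneg (by omega)
      have := line_path {p : Hexa | N < p.1} (-1,0) (by simp) c (c.1 - M).toNat
        (fun i hi => by
          simp only [Set.mem_setOf_eq]
          have : (i : ℤ) ≤ c.1 - M := by
            have := Int.toNat_of_nonneg (show (0:ℤ) ≤ c.1 - M by omega)
            exact_mod_cast le_trans (Nat.cast_le.mpr hi) (le_of_eq hk)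
          have hMN : N < M := lt_of_lt_of_le ha (le_max_left _ _)
          omega)
      have heq : ((c.1 + ((c.1 - M).toNat : ℤ) * (-1:ℤ), c.2 + ((c.1 - M).toNat : ℤ) * (0:ℤ)) : Hexa)
          = (M, c.2) := by
        rw [hk]; refine Prod.ext ?_ ?_ <;> simp <;> ring
      rwa [heq] at this
  have hMN : N < M := lt_of_lt_of_le ha (le_max_left _ _)
  -- vertical move along x = M
  have vert : ∀ y1 y2 : ℤ,
      Relation.ReflTransGen (Step {p : Hexa | N < p.1}) (M, y1) (M, y2) := by
    intro y1 y2
    by_cases hle : y1 ≤ y2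
    · have hk : ((y2 - y1).toNat : ℤ) = y2 - y1 := Int.toNat_of_nonneg (by omega)
      have := line_path {p : Hexa | N < p.1} (0,1) (by simp) (M, y1) (y2 - y1).toNat
        (fun i _ => by simp only [Set.mem_setOf_eq]; omega)
      have heq : ((M + ((y2 - y1).toNat : ℤ) * (0:ℤ), y1 + ((y2 - y1).toNat : ℤ) * (1:ℤ)) : Hexa)
          = (M, y2) := by
        rw [hk]; refine Prod.ext ?_ ?_ <;> simp
      rwa [heq] at this
    · have hk : ((y1 - y2).toNat : ℤ) = y1 - y2 := Int.toNat_of_nonneg (by omega)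
      have := line_path {p : Hexa | N < p.1} (0,-1) (by simp) (M, y1) (y1 - y2).toNat
        (fun i _ => by simp only [Set.mem_setOf_eq]; omega)
      have heq : ((M + ((y1 - y2).toNat : ℤ) * (0:ℤ), y1 + ((y1 - y2).toNat : ℤ) * (-1:ℤ)) : Hexa)
          = (M, y2) := by
        rw [hk]; refine Prod.ext ?_ ?_ <;> simp <;> ring
      rwa [heq] at this
  exact ((horiz a ha).trans (vert a.2 b.2)).trans (rtg_symm (horiz b hb))

/-- A finite set of hexagons is contained in a box. -/
lemma bound {S : Set Hexa} (hS : S.Finite) :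
    ∃ N : ℤ, ∀ p ∈ S, |p.1| ≤ N ∧ |p.2| ≤ N := by
  obtain ⟨N, hN⟩ := (hS.image (fun p => |p.1| ⊔ |p.2|)).bddAbove
  refine ⟨N, fun p hp => ?_⟩
  have := hN (Set.mem_image_of_mem _ hp)
  exact ⟨le_trans (le_max_left _ _) this, le_trans (le_max_right _ _) this⟩

/-- Membership closure of a component. -/
lemma mem_comp_of_reach {L C : Set Hexa} (hC : IsComponent L C) {x y : Hexa}
    (hx : x ∈ C) (hr : ReachIn L x y) : y ∈ C := by
  obtain ⟨a, _, rfl⟩ := hC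
  exact reach_trans hx hr

lemma notmem_comp_of_reach {L C : Set Hexa} (hC : IsComponent L C) {x y : Hexa}
    (hx : x ∉ C) (hr : ReachIn L x y) : y ∉ C := by
  obtain ⟨a, _, rfl⟩ := hC
  intro hy
  exact hx (reach_trans hy (reach_symm hr))

/-- Paths in `L` from `a` stay within the component of `a`. -/
lemma reach_strengthen {L : Set Hexa} {a b : Hexa} (haL : a ∈ L)
    (h : Relation.ReflTransGen (Step L) a b) :
    Relation.ReflTransGen (Step {p | ReachIn L a p}) a b := by
  induction h with
  | refl => exact .refl
  | @tail y z hp hstep ih =>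
      exact ih.tail ⟨hstep.1, ⟨haL, hstep.2.1, hp⟩, ⟨haL, hstep.2.2, hp.tail hstep⟩⟩

/-- Components are connected systems. -/
lemma comp_connected {L C : Set Hexa} (hC : IsComponent L C) : IsConnectedSys C := by
  obtain ⟨a, haL, rfl⟩ := hC
  intro b hb c hc
  refine ⟨hb, hc, ?_⟩
  exact (rtg_symm (reach_strengthen haL hb.2.2)).trans (reach_strengthen haL hc.2.2)

/-- Ray dichotomy: from a point of `Kᶜ` not in the component `C`, the `+x` ray
either reaches `K` within `Cᶜ`, or misses `K` and `C` forever. -/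
lemma ray_case {K C : Set Hexa} (hC : IsComponent Kᶜ C) {x : Hexa}
    (hx : x ∈ Kᶜ) (hxC : x ∉ C) (hCK : C ⊆ Kᶜ) :
    (∃ q, q ∈ K ∧ Relation.ReflTransGen (Step Cᶜ) x q) ∨
    (∀ k : ℕ, ((x.1 + k, x.2) : Hexa) ∈ Kᶜ ∧ ((x.1 + k, x.2) : Hexa) ∉ C) := by
  by_cases h : ∃ k : ℕ, ((x.1 + k, x.2) : Hexa) ∈ K
  · left
    classical
    set k := Nat.find h with hkdef
    have hkK : ((x.1 + k, x.2) : Hexa) ∈ K := Nat.find_spec h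
    have hlt : ∀ i : ℕ, i < k → ((x.1 + i, x.2) : Hexa) ∉ K := fun i hi => Nat.find_min h hi
    -- every ray point before k is reachable from x in Kᶜ, hence not in C
    have hreach : ∀ i : ℕ, i < k → ReachIn Kᶜ x ((x.1 + i, x.2) : Hexa) := by
      intro i hi
      refine ⟨hx, hlt i hi, ?_⟩
      have := line_path Kᶜ (1,0) (by simp) x i
        (fun j hj => by
          have : ((x.1 + j * (1:ℤ), x.2 + j * (0:ℤ)) : Hexa) = (x.1 + j, x.2) := by
            refine Prod.ext ?_ ?_ <;> simp
          rw [this]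
          exact hlt j (lt_of_le_of_lt hj hi))
      have heq : ((x.1 + (i:ℤ) * 1, x.2 + (i:ℤ) * 0) : Hexa) = (x.1 + i, x.2) := by
        refine Prod.ext ?_ ?_ <;> simp
      rwa [heq] at this
    have hCc : ∀ i : ℕ, i ≤ k → ((x.1 + i, x.2) : Hexa) ∈ Cᶜ := by
      intro i hi
      rcases lt_or_eq_of_le hi with hi | hi
      · exact notmem_comp_of_reach hC hxC (hreach i hi)
      · subst hi; intro hc; exact hCK hc hkK
    refine ⟨(x.1 + k, x.2), hkK, ?_⟩
    have := line_path Cᶜ (1,0) (by simp) x k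
      (fun j hj => by
        have heq : ((x.1 + j * (1:ℤ), x.2 + j * (0:ℤ)) : Hexa) = (x.1 + j, x.2) := by
          refine Prod.ext ?_ ?_ <;> simp
        rw [heq]; exact hCc j hj)
    have heq : ((x.1 + (k:ℤ) * 1, x.2 + (k:ℤ) * 0) : Hexa) = (x.1 + k, x.2) := by
      refine Prod.ext ?_ ?_ <;> simp
    rwa [heq] at this
  · right
    push_neg at h
    intro k
    have hK : ∀ i : ℕ, ((x.1 + i, x.2) : Hexa) ∈ Kᶜ := fun i => h i
    refine ⟨hK k, ?_⟩
    have hreach : ReachIn Kᶜ x ((x.1 + k, x.2) : Hexa) := by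
      refine ⟨hx, hK k, ?_⟩
      have := line_path Kᶜ (1,0) (by simp) x k
        (fun j _ => by
          have heq : ((x.1 + j * (1:ℤ), x.2 + j * (0:ℤ)) : Hexa) = (x.1 + j, x.2) := by
            refine Prod.ext ?_ ?_ <;> simp
          rw [heq]; exact hK j)
      have heq : ((x.1 + (k:ℤ) * 1, x.2 + (k:ℤ) * 0) : Hexa) = (x.1 + k, x.2) := by
        refine Prod.ext ?_ ?_ <;> simp
      rwa [heq] at this
    exact notmem_comp_of_reach hC hxC hreach

/-- Escape lemma: a point outside the bounding box of `K` can reach, inside `Kᶜ`,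
a point with large first coordinate. -/
lemma escape {K : Set Hexa} {N : ℤ} (hN : ∀ p ∈ K, |p.1| ≤ N ∧ |p.2| ≤ N)
    {p : Hexa} (hp : N < |p.1| ∨ N < |p.2|) :
    ∃ q : Hexa, N < q.1 ∧ Relation.ReflTransGen (Step Kᶜ) p q := by
  have habs : ∀ c : Hexa, c ∈ K → -N ≤ c.1 ∧ c.1 ≤ N ∧ -N ≤ c.2 ∧ c.2 ≤ N := by
    intro c hc
    obtain ⟨h1, h2⟩ := hN c hc
    exact ⟨(abs_le.mp h1).1, (abs_le.mp h1).2, (abs_le.mp h2).1, (abs_le.mp h2).2⟩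
  -- step 1: if c.2 is out of range we can go right forever
  have ycase : ∀ c : Hexa, (N < c.2 ∨ c.2 < -N) →
      ∃ q : Hexa, N < q.1 ∧ Relation.ReflTransGen (Step Kᶜ) c q := by
    intro c hc
    set k := (N + 1 - c.1).toNat with hk
    have hkval : (k : ℤ) = max (N + 1 - c.1) 0 := Int.toNat_eq_max _
    have hmem : ∀ i : ℕ, ((c.1 + i * (1:ℤ), c.2 + i * (0:ℤ)) : Hexa) ∈ Kᶜ := by
      intro i hKm
      have := (habs _ hKm).2.2
      simp only [mul_zero, add_zero] at this
      omega
    have hpath := line_path Kᶜ (1,0) (by simp) c k (fun i _ => hmem i)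
    refine ⟨(c.1 + (k:ℤ) * 1, c.2 + (k:ℤ) * 0), ?_, hpath⟩
    simp only
    omega
  have xcase : ∀ c : Hexa, c.1 < -N →
      ∃ q : Hexa, N < q.1 ∧ Relation.ReflTransGen (Step Kᶜ) c q := by
    intro c hc
    set k := (N + 1 - c.2).toNat with hk
    have hkval : (k : ℤ) = max (N + 1 - c.2) 0 := Int.toNat_eq_max _
    have hmem : ∀ i : ℕ, ((c.1 + i * (0:ℤ), c.2 + i * (1:ℤ)) : Hexa) ∈ Kᶜ := by
      intro i hKm
      have := (habs _ hKm).1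
      simp only [mul_zero, add_zero] at this
      omega
    have hpath := line_path Kᶜ (0,1) (by simp) c k (fun i _ => hmem i)
    set c' : Hexa := (c.1 + (k:ℤ) * 0, c.2 + (k:ℤ) * 1) with hc'
    have hcy : N < c'.2 ∨ c'.2 < -N := by
      left
      simp only [hc']
      omega
    obtain ⟨q, hq1, hq2⟩ := ycase c' hcy
    exact ⟨q, hq1, hpath.trans hq2⟩
  rcases hp with hp1 | hp2
  · rcases lt_abs.mp hp1 with h | h
    · exact ⟨p, h, .refl⟩
    · exact xcase p (by omega)
  · rcases lt_abs.mp hp2 with h | h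
    · exact ycase p (Or.inl h)
    · exact ycase p (Or.inr (by omega))

lemma rtg_last {L : Set Hexa} {a b : Hexa} (h : Relation.ReflTransGen (Step L) a b)
    (ha : a ∈ L) : b ∈ L := by
  induction h with
  | refl => exact ha
  | tail _ hs _ => exact hs.2.2

/-- every finite component of the complement of a coronoid is a benzenoid,
and the complement of the (unique) infinite component is a benzenoid. -/
theorem stmt7 (K : Set Hexa) (hK : IsCoronoid K) :
    (∀ C, IsComponent Kᶜ C → C.Finite → IsBenzenoid C) ∧
    (∀ C, IsComponent Kᶜ C → C.Infinite → IsBenzenoid Cᶜ) := by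
  obtain ⟨hKfin, hKne, hKconn⟩ := hK
  constructor
  · -- Part 1: finite components of the complement are benzenoids
    intro C hC hfin
    obtain ⟨a, haKc, hCdef⟩ := hC
    have hCcomp : IsComponent Kᶜ C := ⟨a, haKc, hCdef⟩
    have hCsub : C ⊆ Kᶜ := by
      intro b hb; rw [hCdef] at hb; exact hb.2.1
    have haC : a ∈ C := by rw [hCdef]; exact ⟨haKc, haKc, .refl⟩
    have hKCc : K ⊆ Cᶜ := fun p hp hpC => (hCsub hpC) hp
    obtain ⟨N, hN⟩ := bound (hKfin.union hfin)
    have hNabs : ∀ p ∈ K ∪ C, -N ≤ p.1 ∧ p.1 ≤ N ∧ -N ≤ p.2 ∧ p.2 ≤ N := by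
      intro p hp
      obtain ⟨h1, h2⟩ := hN p hp
      exact ⟨(abs_le.mp h1).1, (abs_le.mp h1).2, (abs_le.mp h2).1, (abs_le.mp h2).2⟩
    -- the maximal x-coordinate over K ∪ C is attained by a point of K
    obtain ⟨m0, hm0mem, hm0max⟩ := Set.exists_max_image (K ∪ C) (fun p => p.1)
      (hKfin.union hfin) ⟨a, Or.inr haC⟩
    have hmK : ∃ m ∈ K, ∀ p ∈ K ∪ C, p.1 ≤ m.1 := by
      rcases hm0mem with h | h
      · exact ⟨m0, h, hm0max⟩
      · exfalso
        set c' : Hexa := (m0.1 + 1, m0.2) with hc'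
        have hc'K : c' ∈ Kᶜ := by
          intro hc
          have := hm0max c' (Or.inl hc)
          simp only [hc'] at this
          omega
        have hadj : HexAdj m0 c' := by
          show ((m0.1 + 1 - m0.1, m0.2 - m0.2) : ℤ × ℤ) ∈ _
          have : ((m0.1 + 1 - m0.1, m0.2 - m0.2) : ℤ × ℤ) = (1, 0) := by
            simp only [Prod.mk.injEq]; omega
          rw [this]; simp
        have hreach : ReachIn Kᶜ m0 c' :=
          ⟨hCsub h, hc'K, .single ⟨hadj, hCsub h, hc'K⟩⟩
        have hc'C : c' ∈ C := mem_comp_of_reach hCcomp h hreach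
        have := hm0max c' (Or.inr hc'C)
        simp only [hc'] at this
        omega
    obtain ⟨m, hmKmem, hmmax⟩ := hmK
    -- from any point of K we can escape far to the east inside Cᶜ
    have hKfar : ∀ x ∈ K, ∃ q : Hexa, N < q.1 ∧ Relation.ReflTransGen (Step Cᶜ) x q := by
      intro x hx
      have hxm : Relation.ReflTransGen (Step Cᶜ) x m :=
        rtg_mono hKCc (hKconn x hx m hmKmem).2.2
      set k := (N + 1 - m.1).toNat with hk
      have hkval : (k : ℤ) = max (N + 1 - m.1) 0 := Int.toNat_eq_max _
      have hmem : ∀ i : ℕ, ((m.1 + i * (1:ℤ), m.2 + i * (0:ℤ)) : Hexa) ∈ Cᶜ := by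
        intro i hc
        have h1 := hmmax _ (Or.inr hc)
        simp only at h1
        have hi0 : (i : ℤ) = 0 := by omega
        have heq : ((m.1 + i * (1:ℤ), m.2 + i * (0:ℤ)) : Hexa) = m := by
          refine Prod.ext ?_ ?_ <;> simp [hi0]
        rw [heq] at hc
        exact hKCc hmKmem hc
      have hpath := line_path Cᶜ (1,0) (by simp) m k (fun i _ => hmem i)
      refine ⟨(m.1 + (k:ℤ) * 1, m.2 + (k:ℤ) * 0), ?_, hxm.trans hpath⟩
      simp only
      omega
    -- from any point of Cᶜ we can escape far to the east inside Cᶜ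
    have hfar : ∀ x ∈ Cᶜ, ∃ q : Hexa, N < q.1 ∧ Relation.ReflTransGen (Step Cᶜ) x q := by
      intro x hx
      by_cases hxK : x ∈ K
      · exact hKfar x hxK
      · rcases ray_case hCcomp hxK hx hCsub with ⟨q, hqK, hpath⟩ | hall
        · obtain ⟨q', h1, h2⟩ := hKfar q hqK
          exact ⟨q', h1, hpath.trans h2⟩
        · set k := (N + 1 - x.1).toNat with hk
          have hkval : (k : ℤ) = max (N + 1 - x.1) 0 := Int.toNat_eq_max _
          have hpath := line_path Cᶜ (1,0) (by simp) x k (fun i _ => by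
            have heq : ((x.1 + i * (1:ℤ), x.2 + i * (0:ℤ)) : Hexa) = (x.1 + i, x.2) := by
              refine Prod.ext ?_ ?_ <;> simp
            rw [heq]
            exact (hall i).2)
          refine ⟨(x.1 + (k:ℤ) * 1, x.2 + (k:ℤ) * 0), ?_, hpath⟩
          simp only
          omega
    have hhpsub : {p : Hexa | N < p.1} ⊆ Cᶜ := by
      intro p hp hpC
      have := (hNabs p (Or.inr hpC)).2.1
      simp only [Set.mem_setOf_eq] at hp
      omega
    have hCcConn : IsConnectedSys Cᶜ := by
      intro x hx y hy
      obtain ⟨qx, hqx1, hqx2⟩ := hfar x hx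
      obtain ⟨qy, hqy1, hqy2⟩ := hfar y hy
      exact ⟨hx, hy,
        (hqx2.trans (rtg_mono hhpsub (hp_connect N hqx1 hqy1))).trans (rtg_symm hqy2)⟩
    exact ⟨⟨hfin, ⟨a, haC⟩, comp_connected hCcomp⟩, hCcConn⟩
  · -- Part 2: complement of an infinite component is a benzenoid
    intro C hC hinf
    obtain ⟨a, haKc, hCdef⟩ := hC
    have hCcomp : IsComponent Kᶜ C := ⟨a, haKc, hCdef⟩
    have hCsub : C ⊆ Kᶜ := by
      intro b hb; rw [hCdef] at hb; exact hb.2.1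
    have hKCc : K ⊆ Cᶜ := fun p hp hpC => (hCsub hpC) hp
    obtain ⟨N, hN⟩ := bound hKfin
    have hNabs : ∀ p ∈ K, -N ≤ p.1 ∧ p.1 ≤ N ∧ -N ≤ p.2 ∧ p.2 ≤ N := by
      intro p hp
      obtain ⟨h1, h2⟩ := hN p hp
      exact ⟨(abs_le.mp h1).1, (abs_le.mp h1).2, (abs_le.mp h2).1, (abs_le.mp h2).2⟩
    have absof : ∀ z : ℤ, (N < z ∨ z < -N) → N < |z| := by
      intro z hz
      rcases hz with h | h
      · exact lt_of_lt_of_le h (le_abs_self z)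
      · exact lt_of_lt_of_le (by omega) (neg_le_abs z)
    -- a point of C outside the bounding box of K
    have hbox : (Set.Icc (-N) N ×ˢ Set.Icc (-N) N : Set Hexa).Finite :=
      (Set.finite_Icc _ _).prod (Set.finite_Icc _ _)
    have hnotsub : ¬ C ⊆ (Set.Icc (-N) N ×ˢ Set.Icc (-N) N : Set Hexa) :=
      fun h => hinf (hbox.subset h)
    obtain ⟨c0, hc0C, hc0out⟩ := Set.not_subset.mp hnotsub
    have houtcond : ∀ p : Hexa, p ∉ (Set.Icc (-N) N ×ˢ Set.Icc (-N) N : Set Hexa) →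
        N < |p.1| ∨ N < |p.2| := by
      intro p hp
      simp only [Set.mem_prod, Set.mem_Icc, not_and_or, not_and, not_le] at hp
      by_contra hcon
      push_neg at hcon
      obtain ⟨h1, h2⟩ := hcon
      have h1' := abs_le.mp h1
      have h2' := abs_le.mp h2
      rcases hp with h | h
      · omega
      · omega
    obtain ⟨q0, hq01, hq02⟩ := escape hN (houtcond c0 hc0out)
    have hc0Kc : c0 ∈ Kᶜ := hCsub hc0C
    have hq0Kc : q0 ∈ Kᶜ := rtg_last hq02 hc0Kc
    have hq0C : q0 ∈ C := mem_comp_of_reach hCcomp hc0C ⟨hc0Kc, hq0Kc, hq02⟩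
    have hhpsub : {p : Hexa | N < p.1} ⊆ Kᶜ := by
      intro p hp hpK
      have := (hNabs p hpK).2.1
      simp only [Set.mem_setOf_eq] at hp
      omega
    -- every point outside the box lies in C
    have hkey : ∀ p : Hexa, (N < |p.1| ∨ N < |p.2|) → p ∈ C := by
      intro p hp
      have hpKc : p ∈ Kᶜ := by
        intro hpK
        obtain ⟨h1, h2⟩ := hN p hpK
        rcases hp with h | h <;> omega
      obtain ⟨q, hq1, hq2⟩ := escape hN hp
      have hqKc : q ∈ Kᶜ := rtg_last hq2 hpKc
      have hpath : Relation.ReflTransGen (Step Kᶜ) q0 p :=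
        rtg_symm (hq2.trans (rtg_mono hhpsub (hp_connect N hq1 hq01)))
      exact mem_comp_of_reach hCcomp hq0C ⟨hq0Kc, hpKc, hpath⟩
    -- hence Cᶜ is contained in the box, so it is finite
    have hCcfin : Cᶜ.Finite := hbox.subset (by
      intro p hp
      by_contra hpbox
      exact hp (hkey p (houtcond p hpbox)))
    -- every point of Cᶜ reaches K inside Cᶜ
    have htoK : ∀ x ∈ Cᶜ, ∃ q ∈ K, Relation.ReflTransGen (Step Cᶜ) x q := by
      intro x hx
      by_cases hxK : x ∈ K
      · exact ⟨x, hxK, .refl⟩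
      · rcases ray_case hCcomp hxK hx hCsub with ⟨q, hqK, hpath⟩ | hall
        · exact ⟨q, hqK, hpath⟩
        · exfalso
          set k := (N + 1 - x.1).toNat with hk
          have hkval : (k : ℤ) = max (N + 1 - x.1) 0 := Int.toNat_eq_max _
          refine (hall k).2 (hkey _ (Or.inl (absof _ (Or.inl ?_))))
          simp only
          omega
    have hCcConn : IsConnectedSys Cᶜ := by
      intro x hx y hy
      obtain ⟨qx, hqxK, hqx⟩ := htoK x hx
      obtain ⟨qy, hqyK, hqy⟩ := htoK y hy
      have hmid : Relation.ReflTransGen (Step Cᶜ) qx qy :=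
        rtg_mono hKCc (hKconn qx hqxK qy hqyK).2.2
      exact ⟨hx, hy, (hqx.trans hmid).trans (rtg_symm hqy)⟩
    have hCconn : IsConnectedSys Cᶜᶜ := by
      rw [compl_compl]
      exact comp_connected hCcomp
    obtain ⟨w, hw⟩ := hKne
    exact ⟨⟨hCcfin, ⟨w, hKCc hw⟩, hCcConn⟩, hCconn⟩
end

section
/- Let G be a graph with K Kekulé structures (perfect matchings) and let G' = A^n(G) be an iterated generalised altan with iteration vector n = (n_1, ..., n_k). Then the number of perfect matchings of G' is K' = 2^{|n|} · K where |n| = n_1 + ... + n_k; moreover no spoke edge belongs to any perfect matching of G', and if n_i > 0 then every edge on the i-th new perimeter cycle belongs to exactly K'/2 perfect matchings. -/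
/-- A graph together with, for each perimeter cycle, the cyclically ordered list of its
degree-2 vertices (the "roots" where spokes will be attached), and bookkeeping of the
spoke edges and the current perimeter (new-cycle) edges produced so far. -/
structure AltState where
  V : Type
  G : SimpleGraph V
  roots : List (List V)
  spokes : Set (Sym2 V)
  perimEdges : List (Set (Sym2 V))

/-- The altan of `G` with respect to the cyclically ordered degree-2 root list `r`:
add a new cycle on `2 * r.length` vertices (modelled by `ZMod (2 * r.length)`) and join
every second new vertex (the even ones) to the corresponding root by a spoke. -/
def altanG {V : Type} (G : SimpleGraph V) (r : List V) :
    SimpleGraph (V ⊕ ZMod (2 * r.length)) :=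
  SimpleGraph.fromRel (fun x y =>
    match x, y with
    | Sum.inl a, Sum.inl b => G.Adj a b
    | Sum.inl a, Sum.inr z =>
        ∃ j : Fin r.length, r.get j = a ∧ z = ((2 * (j : ℕ) : ℕ) : ZMod (2 * r.length))
    | Sum.inr z, Sum.inr w => w = z + 1
    | _, _ => False)

/-- Perform the altan operation at the `i`-th perimeter. The new perimeter at index `i`
consists of the odd new vertices; spoke and perimeter-edge bookkeeping is updated. -/
def altanAt (S : AltState) (i : ℕ) : AltState :=
  let r := S.roots.getD i []
  { V := S.V ⊕ ZMod (2 * r.length)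
    G := altanG S.G r
    roots := (S.roots.map (List.map Sum.inl)).set i
      ((List.range r.length).map
        (fun j => Sum.inr ((2 * j + 1 : ℕ) : ZMod (2 * r.length))))
    spokes := (Sym2.map Sum.inl '' S.spokes) ∪
      {e | ∃ j : Fin r.length,
        e = s(Sum.inl (r.get j),
              (Sum.inr ((2 * (j : ℕ) : ℕ) : ZMod (2 * r.length)) :
                S.V ⊕ ZMod (2 * r.length)))}
    perimEdges := (S.perimEdges.map (Set.image (Sym2.map Sum.inl))).set i
      {e | ∃ z : ZMod (2 * r.length),
        e = s((Sum.inr z : S.V ⊕ ZMod (2 * r.length)), Sum.inr (z + 1))} }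

/-- Apply the altan operation `m` times at perimeter `i`. -/
def applyTimes (S : AltState) (i : ℕ) : ℕ → AltState
  | 0 => S
  | m + 1 => altanAt (applyTimes S i m) i

/-- The iterated generalised altan `A^n`: apply the altan operation `n i` times at the
`i`-th perimeter, for each `i`. -/
def iterAltan (S : AltState) (n : List ℕ) : AltState :=
  (List.range n.length).foldl (fun T i => applyTimes T i (n.getD i 0)) S

/-- The number of Kekulé structures (perfect matchings) of a graph. -/
noncomputable def numPM {V : Type} (G : SimpleGraph V) : ℕ :=
  {M : G.Subgraph | M.IsPerfectMatching}.ncard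

open SimpleGraph Sum

section parity
variable {d : ℕ}

lemma zmod_one_ne_zero (k : ℕ) : (1 : ZMod (2*k)) ≠ 0 := by
  cases k with
  | zero =>
    intro h
    exact one_ne_zero (α := ℤ) h
  | succ n =>
    haveI : Fact (1 < 2*(n+1)) := ⟨by omega⟩
    exact one_ne_zero

lemma zmod_two_ne_zero (hd : 2 ≤ d) : (2 : ZMod (2*d)) ≠ 0 := by
  haveI : NeZero (2*d) := ⟨by omega⟩
  intro h
  have := (ZMod.natCast_eq_zero_iff 2 (2*d)).mp (by exact_mod_cast h)
  have := Nat.le_of_dvd (by norm_num) this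
  omega

lemma val_flip (hd : 2 ≤ d) (z : ZMod (2*d)) : Even (z+1).val ↔ ¬ Even z.val := by
  haveI : NeZero (2*d) := ⟨by omega⟩
  haveI : Fact (1 < 2*d) := ⟨by omega⟩
  rw [ZMod.val_add, ZMod.val_one]
  have h2 : (2:ℕ) ∣ 2*d := ⟨d, rfl⟩
  rw [Nat.even_iff, Nat.even_iff, Nat.mod_mod_of_dvd _ h2]
  omega

lemma val_add_nat (hd : 2 ≤ d) (z : ZMod (2*d)) (k : ℕ) :
    Even ((z + k).val) ↔ (Even z.val ↔ Even k) := by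
  haveI : NeZero (2*d) := ⟨by omega⟩
  have h2 : (2:ℕ) ∣ 2*d := ⟨d, rfl⟩
  rw [ZMod.val_add, ZMod.val_natCast]
  rw [Nat.even_iff, Nat.even_iff, Nat.even_iff, Nat.mod_mod_of_dvd _ h2,
    Nat.add_mod, Nat.mod_mod_of_dvd _ h2, ← Nat.add_mod]
  omega

end parity

section core
variable {W : Type} {H : SimpleGraph W} {r : List W}

lemma altan_adj_ll {a c : W} : (altanG H r).Adj (inl a) (inl c) ↔ H.Adj a c := by
  constructor
  · rintro ⟨hne, h | h⟩
    · exact h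
    · exact h.symm
  · intro h
    exact ⟨by simpa using h.ne, Or.inl h⟩

lemma altan_adj_lr {a : W} {z : ZMod (2*r.length)} :
    (altanG H r).Adj (inl a) (inr z) ↔
      ∃ j : Fin r.length, r.get j = a ∧ z = ((2 * (j : ℕ) : ℕ) : ZMod (2 * r.length)) := by
  constructor
  · rintro ⟨hne, h | h⟩
    · exact h
    · exact h.elim
  · intro h
    exact ⟨by simp, Or.inl h⟩

lemma altan_adj_rr {z w : ZMod (2*r.length)} :
    (altanG H r).Adj (inr z) (inr w) ↔ z ≠ w ∧ (w = z + 1 ∨ z = w + 1) := by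
  constructor
  · rintro ⟨hne, h | h⟩
    · exact ⟨by simpa [eq_comm] using hne, Or.inl h⟩
    · exact ⟨by simpa [eq_comm] using hne, Or.inr h⟩
  · rintro ⟨hne, h⟩
    exact ⟨by simpa using hne, h⟩

/-- The candidate perfect matching of the altan built from a matching `N` of the base
graph and a parity choice `b` for the new cycle. -/
def phi (H : SimpleGraph W) (r : List W) (N : H.Subgraph) (b : Bool) :
    (altanG H r).Subgraph where
  verts := Set.univ
  Adj x y := match x, y with
    | Sum.inl a, Sum.inl c => N.Adj a c
    | Sum.inr z, Sum.inr w =>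
        (w = z + 1 ∧ (Even z.val ↔ b = false)) ∨ (z = w + 1 ∧ (Even w.val ↔ b = false))
    | _, _ => False
  adj_sub := by
    intro x y h
    match x, y with
    | Sum.inl a, Sum.inl c => exact altan_adj_ll.mpr (N.adj_sub h)
    | Sum.inl a, Sum.inr z => exact h.elim
    | Sum.inr z, Sum.inl a => exact h.elim
    | Sum.inr z, Sum.inr w =>
      refine altan_adj_rr.mpr ⟨?_, ?_⟩
      · rcases h with ⟨h1, _⟩ | ⟨h1, _⟩
        · rw [h1]; intro hc
          exact zmod_one_ne_zero r.length (left_eq_add.mp hc)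
        · rw [h1]; intro hc
          exact zmod_one_ne_zero r.length (left_eq_add.mp hc.symm)
      · rcases h with ⟨h1, _⟩ | ⟨h1, _⟩
        · exact Or.inl h1
        · exact Or.inr h1
  edge_vert := fun _ => Set.mem_univ _
  symm := by
    refine ⟨?_⟩
    intro x y h
    match x, y with
    | Sum.inl a, Sum.inl c => exact N.adj_symm h
    | Sum.inl a, Sum.inr z => exact h.elim
    | Sum.inr z, Sum.inl a => exact h.elim
    | Sum.inr z, Sum.inr w => exact h.symm

lemma phi_adj_ll {N : H.Subgraph} {b : Bool} {a c : W} :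
    (phi H r N b).Adj (inl a) (inl c) ↔ N.Adj a c := Iff.rfl

lemma phi_not_adj_lr {N : H.Subgraph} {b : Bool} {a : W} {z : ZMod (2*r.length)} :
    ¬ (phi H r N b).Adj (inl a) (inr z) := fun h => h

lemma phi_adj_rr {N : H.Subgraph} {b : Bool} {z w : ZMod (2*r.length)} :
    (phi H r N b).Adj (inr z) (inr w) ↔
      (w = z + 1 ∧ (Even z.val ↔ b = false)) ∨ (z = w + 1 ∧ (Even w.val ↔ b = false)) :=
  Iff.rfl

variable (hr : 2 ≤ r.length)

lemma phi_adj_perim (hr : 2 ≤ r.length) {N : H.Subgraph} {b : Bool} {z : ZMod (2*r.length)} :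
    (phi H r N b).Adj (inr z) (inr (z+1)) ↔ (Even z.val ↔ b = false) := by
  rw [phi_adj_rr]
  constructor
  · rintro (⟨_, h⟩ | ⟨h1, _⟩)
    · exact h
    · exfalso
      have : (2 : ZMod (2*r.length)) = 0 := by
        have := left_eq_add.mp (by rw [add_assoc] at h1; exact h1)
        rw [← this]; norm_num
      exact zmod_two_ne_zero hr this
  · intro h; exact Or.inl ⟨rfl, h⟩

lemma phi_pm (hr : 2 ≤ r.length) {N : H.Subgraph} (hN : N.IsPerfectMatching) (b : Bool) :
    (phi H r N b).IsPerfectMatching := by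
  constructor
  · rintro x -
    match x with
    | Sum.inl a =>
      obtain ⟨c, hc, hu⟩ := hN.1 (hN.2 a)
      refine ⟨inl c, hc, ?_⟩
      rintro (y | y) hy
      · simpa using hu y hy
      · exact absurd hy phi_not_adj_lr
    | Sum.inr z =>
      by_cases hz : Even z.val ↔ b = false
      · refine ⟨inr (z+1), phi_adj_rr.mpr (Or.inl ⟨rfl, hz⟩), ?_⟩
        rintro (y | y) hy
        · exact absurd ((phi H r N b).adj_symm hy) phi_not_adj_lr
        · rcases phi_adj_rr.mp hy with ⟨h1, _⟩ | ⟨h1, h2⟩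
          · rw [h1]
          · exfalso
            have : Even (y+1).val ↔ b = false := h1 ▸ hz
            rw [val_flip hr] at this
            tauto
      · have hz' : Even (z-1).val ↔ b = false := by
          have := val_flip hr (z-1)
          rw [sub_add_cancel] at this
          tauto
        refine ⟨inr (z-1), phi_adj_rr.mpr (Or.inr ⟨(sub_add_cancel z 1).symm, hz'⟩), ?_⟩
        rintro (y | y) hy
        · exact absurd ((phi H r N b).adj_symm hy) phi_not_adj_lr
        · rcases phi_adj_rr.mp hy with ⟨h1, h2⟩ | ⟨h1, h2⟩
          · exact absurd h2 hz
          · rw [eq_sub_of_add_eq h1.symm]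
  · intro x; exact Set.mem_univ _

section classify
variable {M : (altanG H r).Subgraph}

lemma adj_inr_cases {z : ZMod (2*r.length)} {x : W ⊕ ZMod (2*r.length)}
    (h : M.Adj (inr z) x) :
    (∃ w, x = inr w ∧ (w = z + 1 ∨ z = w + 1)) ∨ (∃ a, x = inl a ∧ Even z.val) := by
  have hadj := M.adj_sub h
  match x with
  | Sum.inl a =>
    right
    refine ⟨a, rfl, ?_⟩
    obtain ⟨j, -, hj⟩ := altan_adj_lr.mp hadj.symm
    rw [hj, ZMod.val_cast_of_lt (by omega)]
    exact ⟨(j:ℕ), two_mul (j:ℕ)⟩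
  | Sum.inr w =>
    left
    exact ⟨w, rfl, (altan_adj_rr.mp hadj).2⟩

/-- the unique partner of a vertex in a perfect matching -/
noncomputable def pmPartner (hM : M.IsPerfectMatching) (x : W ⊕ ZMod (2*r.length)) :
    W ⊕ ZMod (2*r.length) :=
  (hM.1 (hM.2 x)).choose

lemma pmPartner_adj (hM : M.IsPerfectMatching) (x : W ⊕ ZMod (2*r.length)) :
    M.Adj x (pmPartner hM x) := (hM.1 (hM.2 x)).choose_spec.1

lemma pmPartner_eq (hM : M.IsPerfectMatching) {x y : W ⊕ ZMod (2*r.length)}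
    (h : M.Adj x y) : y = pmPartner hM x := (hM.1 (hM.2 x)).choose_spec.2 y h

lemma pmPartner_inj (hM : M.IsPerfectMatching) {x y : W ⊕ ZMod (2*r.length)}
    (h : pmPartner hM x = pmPartner hM y) : x = y := by
  have hx := pmPartner_adj hM x
  have hy := pmPartner_adj hM y
  rw [h] at hx
  exact (pmPartner_eq hM hx.symm).trans (pmPartner_eq hM hy.symm).symm

/-- the partner of an odd new vertex is an (even) new vertex adjacent on the cycle -/
lemma odd_partner (hr : 2 ≤ r.length) (hM : M.IsPerfectMatching)
    {z : ZMod (2*r.length)} (hz : ¬ Even z.val) :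
    ∃ w, pmPartner hM (inr z) = inr w ∧ Even w.val ∧ (w = z + 1 ∨ z = w + 1) := by
  rcases adj_inr_cases (pmPartner_adj hM (inr z)) with ⟨w, hw, hc⟩ | ⟨a, -, ha⟩
  · refine ⟨w, hw, ?_, hc⟩
    rcases hc with h1 | h1
    · rw [h1, val_flip hr]; exact hz
    · by_contra hw'
      have := (val_flip hr w).mpr hw'
      rw [← h1] at this
      exact hz this
  · exact absurd ha hz

/-- key counting step: every even new vertex is matched to an odd new vertex. -/
lemma even_partner (hr : 2 ≤ r.length) (hM : M.IsPerfectMatching)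
    {w : ZMod (2*r.length)} (hw : Even w.val) :
    ∃ z, pmPartner hM (inr w) = inr z ∧ ¬ Even z.val ∧ (z = w + 1 ∨ w = z + 1) := by
  haveI : NeZero (2*r.length) := ⟨by omega⟩
  -- bijection between odds and evens
  classical
  let O := {z : ZMod (2*r.length) // ¬ Even z.val}
  let E := {z : ZMod (2*r.length) // Even z.val}
  have hcard : Fintype.card O = Fintype.card E := by
    refine Fintype.card_congr ?_
    refine ⟨fun z => ⟨z.1 + 1, (val_flip hr z.1).mpr z.2⟩,
            fun w => ⟨w.1 - 1, ?_⟩, fun z => by simp, fun w => by simp⟩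
    have := val_flip hr (w.1 - 1)
    rw [sub_add_cancel] at this
    exact this.mp w.2
  let g : O → E := fun z => ⟨(odd_partner hr hM z.2).choose,
    (odd_partner hr hM z.2).choose_spec.2.1⟩
  have hg : ∀ z : O, pmPartner hM (inr z.1) = inr (g z).1 :=
    fun z => (odd_partner hr hM z.2).choose_spec.1
  have hginj : Function.Injective g := by
    intro z1 z2 h
    have : pmPartner hM (inr z1.1) = pmPartner hM (inr z2.1) := by
      rw [hg z1, hg z2, h]
    have := pmPartner_inj hM this
    exact Subtype.ext (by injection this)
  have hgsurj : Function.Surjective g :=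
    ((Fintype.bijective_iff_injective_and_card g).mpr ⟨hginj, hcard⟩).2
  obtain ⟨z, hz⟩ := hgsurj ⟨w, hw⟩
  have hadj : M.Adj (inr z.1) (inr w) := by
    have := pmPartner_adj hM (inr z.1)
    rw [hg z, hz] at this
    exact this
  refine ⟨z.1, (pmPartner_eq hM hadj.symm).symm, z.2, ?_⟩
  have := (odd_partner hr hM z.2).choose_spec.2.2
  have hw' : (odd_partner hr hM z.2).choose = w := by
    have := congrArg Subtype.val hz
    exact this
  rw [hw'] at this
  tauto

lemma inr_partner (hr : 2 ≤ r.length) (hM : M.IsPerfectMatching) (z : ZMod (2*r.length)) :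
    M.Adj (inr z) (inr (z+1)) ∨ M.Adj (inr z) (inr (z-1)) := by
  by_cases hz : Even z.val
  · obtain ⟨w, hw, -, hc⟩ := even_partner hr hM hz
    have hadj := pmPartner_adj hM (inr z)
    rw [hw] at hadj
    rcases hc with h1 | h1
    · left; rwa [← h1]
    · right; rwa [← eq_sub_of_add_eq h1.symm]
  · obtain ⟨w, hw, -, hc⟩ := odd_partner hr hM hz
    have hadj := pmPartner_adj hM (inr z)
    rw [hw] at hadj
    rcases hc with h1 | h1
    · left; rwa [← h1]
    · right; rwa [← eq_sub_of_add_eq h1.symm]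

lemma no_spoke (hr : 2 ≤ r.length) (hM : M.IsPerfectMatching)
    {z : ZMod (2*r.length)} {a : W} : ¬ M.Adj (inr z) (inl a) := by
  intro h
  have h1 := pmPartner_eq hM h
  rcases inr_partner hr hM z with h2 | h2 <;>
    · exact absurd (h1.trans (pmPartner_eq hM h2).symm) (by simp)

lemma not_both (hr : 2 ≤ r.length) (hM : M.IsPerfectMatching) {z : ZMod (2*r.length)} :
    ¬ (M.Adj (inr z) (inr (z+1)) ∧ M.Adj (inr z) (inr (z-1))) := by
  rintro ⟨h1, h2⟩
  have := (pmPartner_eq hM h1).trans (pmPartner_eq hM h2).symm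
  have h3 : (2 : ZMod (2*r.length)) = 0 := by
    have h4 := Sum.inr.inj this
    have : z + 1 - (z - 1) = 0 := by rw [h4]; ring
    calc (2 : ZMod (2*r.length)) = z + 1 - (z - 1) := by ring
    _ = 0 := this
  exact zmod_two_ne_zero hr h3

lemma cycle_classify (hr : 2 ≤ r.length) (hM : M.IsPerfectMatching) :
    ∃ b : Bool, ∀ z : ZMod (2*r.length),
      (M.Adj (inr z) (inr (z+1)) ↔ (Even z.val ↔ b = false)) := by
  haveI : NeZero (2*r.length) := ⟨by omega⟩
  classical
  -- find z0 with M.Adj (inr z0) (inr (z0+1))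
  obtain ⟨z0, hz0⟩ : ∃ z0 : ZMod (2*r.length), M.Adj (inr z0) (inr (z0+1)) := by
    rcases inr_partner hr hM 0 with h | h
    · exact ⟨0, h⟩
    · exact ⟨0-1, by rw [sub_add_cancel]; exact h.symm⟩
  have key : ∀ k : ℕ, M.Adj (inr (z0 + k)) (inr (z0 + k + 1)) ↔ Even k := by
    intro k
    induction k with
    | zero => simpa using hz0
    | succ k ih =>
      have hone : ∀ u : ZMod (2*r.length), M.Adj (inr u) (inr (u+1)) ↔ ¬ M.Adj (inr u) (inr (u-1)) := by
        intro u
        constructor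
        · intro h1 h2; exact not_both hr hM ⟨h1, h2⟩
        · intro h1; rcases inr_partner hr hM u with h | h
          · exact h
          · exact absurd h h1
      push_cast
      rw [hone]
      have he : z0 + (k + 1 : ZMod (2*r.length)) - 1 = z0 + k := by ring
      rw [he]
      have : M.Adj (inr (z0 + k + 1)) (inr (z0 + k)) ↔ M.Adj (inr (z0 + k)) (inr (z0 + k + 1)) :=
        ⟨fun h => h.symm, fun h => h.symm⟩
      rw [show z0 + (k + 1 : ZMod (2*r.length)) = z0 + k + 1 by ring, this, ih]
      rw [Nat.even_add_one]
  refine ⟨if Even z0.val then false else true, fun z => ?_⟩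
  have hz : z0 + ((z - z0).val : ZMod (2*r.length)) = z := by
    rw [ZMod.natCast_val, ZMod.cast_id]; ring
  have h1 := key (z - z0).val
  rw [hz] at h1
  have h2 := val_add_nat hr z0 (z - z0).val
  rw [hz] at h2
  by_cases hz0e : Even z0.val <;> simp only [hz0e, if_true, if_false] <;> rw [h1] <;> tauto

/-- the restriction of a matching of the altan to the base graph -/
def restrict (M : (altanG H r).Subgraph) : H.Subgraph where
  verts := Set.univ
  Adj a c := M.Adj (inl a) (inl c)
  adj_sub := fun h => altan_adj_ll.mp (M.adj_sub h)
  edge_vert := fun _ => Set.mem_univ _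
  symm := ⟨fun _ _ h => h.symm⟩

lemma restrict_pm (hr : 2 ≤ r.length) (hM : M.IsPerfectMatching) :
    (restrict M).IsPerfectMatching := by
  constructor
  · rintro a -
    obtain ⟨x, hx, hu⟩ := hM.1 (hM.2 (inl a))
    match x, hx with
    | Sum.inl c, hx =>
      refine ⟨c, hx, fun y hy => ?_⟩
      have := hu (inl y) hy
      injection this
    | Sum.inr z, hx => exact absurd hx.symm (no_spoke hr hM)
  · intro a; exact Set.mem_univ _

lemma pm_classify (hr : 2 ≤ r.length) (hM : M.IsPerfectMatching) :
    ∃ (N : H.Subgraph) (b : Bool), N.IsPerfectMatching ∧ M = phi H r N b := by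
  obtain ⟨b, hb⟩ := cycle_classify hr hM
  refine ⟨restrict M, b, restrict_pm hr hM, ?_⟩
  ext x y
  · simp [phi, restrict, hM.2 x]
  · constructor
    · intro h
      match x, y with
      | Sum.inl a, Sum.inl c => exact h
      | Sum.inl a, Sum.inr z => exact absurd h.symm (no_spoke hr hM)
      | Sum.inr z, Sum.inl a => exact absurd h (no_spoke hr hM)
      | Sum.inr z, Sum.inr w =>
        rcases (altan_adj_rr.mp (M.adj_sub h)).2 with h1 | h1
        · exact Or.inl ⟨h1, (hb z).mp (h1 ▸ h)⟩
        · exact Or.inr ⟨h1, (hb w).mp (h1 ▸ h.symm)⟩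
    · intro h
      match x, y with
      | Sum.inl a, Sum.inl c => exact h
      | Sum.inl a, Sum.inr z => exact h.elim
      | Sum.inr z, Sum.inl a => exact h.elim
      | Sum.inr z, Sum.inr w =>
        rcases h with ⟨h1, h2⟩ | ⟨h1, h2⟩
        · rw [h1]; exact (hb z).mpr h2
        · rw [h1]; exact ((hb w).mpr h2).symm

lemma phi_adj01 (hr : 2 ≤ r.length) {N : H.Subgraph} {b : Bool} :
    (phi H r N b).Adj (inr 0) (inr (0+1)) ↔ b = false := by
  haveI : NeZero (2*r.length) := ⟨by omega⟩
  rw [phi_adj_perim hr]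
  simp [ZMod.val_zero]

lemma phi_inj (hr : 2 ≤ r.length) {N N' : H.Subgraph} {b b' : Bool}
    (hN : N.IsPerfectMatching) (hN' : N'.IsPerfectMatching)
    (h : phi H r N b = phi H r N' b') : N = N' ∧ b = b' := by
  constructor
  · ext a c
    · simp [hN.2 a, hN'.2 a]
    · rw [← phi_adj_ll (r := r) (b := b), ← phi_adj_ll (r := r) (b := b'), h]
  · have := phi_adj01 (N := N) (b := b) hr
    rw [h, phi_adj01 hr] at this
    rcases b with _|_ <;> rcases b' with _|_ <;> simp_all

lemma pm_bij (hr : 2 ≤ r.length) :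
    Function.Bijective
      (fun p : {N : H.Subgraph // N.IsPerfectMatching} × Bool =>
        (⟨phi H r p.1.1 p.2, phi_pm hr p.1.2 p.2⟩ :
          {M : (altanG H r).Subgraph // M.IsPerfectMatching})) := by
  constructor
  · rintro ⟨N, b⟩ ⟨N', b'⟩ h
    obtain ⟨h1, h2⟩ := phi_inj hr N.2 N'.2 (Subtype.ext_iff.mp h)
    simp only [Prod.mk.injEq]
    exact ⟨Subtype.ext h1, h2⟩
  · rintro ⟨M, hM⟩
    obtain ⟨N, b, hN, hMN⟩ := pm_classify hr hM
    exact ⟨⟨⟨N, hN⟩, b⟩, by simp [hMN]⟩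

lemma numPM_altan (hr : 2 ≤ r.length) : numPM (altanG H r) = 2 * numPM H := by
  classical
  rw [numPM, numPM, ← Nat.card_coe_set_eq, ← Nat.card_coe_set_eq,
    Set.coe_setOf, Set.coe_setOf]
  rw [← Nat.card_eq_of_bijective _ (pm_bij hr)]
  rw [Nat.card_prod]
  simp [Nat.card_eq_fintype_card, mul_comm]

lemma inl_edge_mem (M : (altanG H r).Subgraph) (e : Sym2 W) :
    Sym2.map inl e ∈ M.edgeSet ↔ e ∈ (restrict M).edgeSet := by
  induction e using Sym2.ind with
  | _ x y => simp [SimpleGraph.Subgraph.mem_edgeSet, restrict]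

lemma no_spoke_edge (hr : 2 ≤ r.length) (hM : M.IsPerfectMatching) (a : W)
    (z : ZMod (2*r.length)) : s(inl a, inr z) ∉ M.edgeSet := by
  intro h
  exact no_spoke hr hM (SimpleGraph.Subgraph.mem_edgeSet.mp h).symm

lemma numPM_altan_perim (hr : 2 ≤ r.length) (z : ZMod (2*r.length)) :
    {M : (altanG H r).Subgraph |
        M.IsPerfectMatching ∧ s(inr z, inr (z+1)) ∈ M.edgeSet}.ncard = numPM H := by
  classical
  set b0 : Bool := if Even z.val then false else true with hb0
  have hb0' : Even z.val ↔ b0 = false := by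
    by_cases h : Even z.val <;> simp [hb0, h]
  rw [numPM, ← Nat.card_coe_set_eq, ← Nat.card_coe_set_eq,
    Set.coe_setOf, Set.coe_setOf]
  refine (Nat.card_eq_of_bijective
    (fun N : {N : H.Subgraph // N.IsPerfectMatching} =>
      (⟨phi H r N.1 b0, phi_pm hr N.2 b0,
        SimpleGraph.Subgraph.mem_edgeSet.mpr ((phi_adj_perim hr).mpr hb0')⟩ :
        {M : (altanG H r).Subgraph //
          M.IsPerfectMatching ∧ s(inr z, inr (z+1)) ∈ M.edgeSet})) ?_).symm
  constructor
  · rintro N N' h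
    exact Subtype.ext (phi_inj hr N.2 N'.2 (Subtype.ext_iff.mp h)).1
  · rintro ⟨M, hM, he⟩
    obtain ⟨N, b, hN, hMN⟩ := pm_classify hr hM
    refine ⟨⟨N, hN⟩, Subtype.ext ?_⟩
    have hb : b = b0 := by
      rw [hMN] at he
      have h2 := (phi_adj_perim hr).mp (SimpleGraph.Subgraph.mem_edgeSet.mp he)
      have hbb : (b = false) ↔ (b0 = false) := h2.symm.trans hb0'
      clear_value b0
      clear he hMN hM hb0' h2
      rcases b with _|_ <;> rcases b0 with _|_ <;> simp_all
    simp [hMN, hb]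

lemma numPM_altan_inl_edge (hr : 2 ≤ r.length) (e : Sym2 W) :
    {M : (altanG H r).Subgraph |
        M.IsPerfectMatching ∧ Sym2.map inl e ∈ M.edgeSet}.ncard
      = 2 * {N : H.Subgraph | N.IsPerfectMatching ∧ e ∈ N.edgeSet}.ncard := by
  classical
  rw [← Nat.card_coe_set_eq, ← Nat.card_coe_set_eq,
    Set.coe_setOf, Set.coe_setOf]
  have key : ∀ (N : H.Subgraph) (b : Bool),
      Sym2.map inl e ∈ (phi H r N b).edgeSet ↔ e ∈ N.edgeSet := by
    intro N b
    rw [inl_edge_mem]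
    induction e using Sym2.ind with
    | _ x y => simp [SimpleGraph.Subgraph.mem_edgeSet, restrict, phi_adj_ll]
  have := Nat.card_eq_of_bijective
    (f := fun p : {N : H.Subgraph // N.IsPerfectMatching ∧ e ∈ N.edgeSet} × Bool =>
      (⟨phi H r p.1.1 p.2, phi_pm hr p.1.2.1 p.2, (key _ _).mpr p.1.2.2⟩ :
        {M : (altanG H r).Subgraph //
          M.IsPerfectMatching ∧ Sym2.map inl e ∈ M.edgeSet}))
    (by
      constructor
      · rintro ⟨N, b⟩ ⟨N', b'⟩ h
        obtain ⟨h1, h2⟩ := phi_inj hr N.2.1 N'.2.1 (Subtype.ext_iff.mp h)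
        simp only [Prod.mk.injEq]
        exact ⟨Subtype.ext h1, h2⟩
      · rintro ⟨M, hM, he⟩
        obtain ⟨N, b, hN, hMN⟩ := pm_classify hr hM
        refine ⟨⟨⟨N, hN, ?_⟩, b⟩, Subtype.ext hMN.symm⟩
        rw [hMN] at he
        exact (key _ _).mp he)
  rw [← this, Nat.card_prod]
  simp [Nat.card_eq_fintype_card, mul_comm]

end classify
end core

section state

/-- helper: `getD` after `set` at the same index -/
lemma getD_set_self {α : Type*} (l : List α) (i : ℕ) (a d : α) (h : i < l.length) :
    (l.set i a).getD i d = a := by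
  rw [List.getD_eq_getElem _ _ (by simpa using h)]
  simp [List.getElem_set, h]

lemma getD_set_ne {α : Type*} (l : List α) (i j : ℕ) (a d : α) (h : j ≠ i) :
    (l.set i a).getD j d = l.getD j d := by
  by_cases hj : j < l.length
  · rw [List.getD_eq_getElem _ _ (by simpa using hj), List.getD_eq_getElem _ _ hj]
    simp [List.getElem_set, Ne.symm h]
  · rw [List.getD_eq_default _ _ (by simpa using not_lt.mp hj),
      List.getD_eq_default _ _ (not_lt.mp hj)]

lemma getD_map' {α β : Type*} (l : List α) (f : α → β) (i : ℕ) (d : α) (h : i < l.length) :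
    (l.map f).getD i (f d) = f (l.getD i d) := List.getD_map l d f

/-- The induction invariant carried along the altan iteration. -/
structure AltInv {V0 : Type} (G0 : SimpleGraph V0) (L : ℕ) (c : ℕ) (U : AltState) : Prop where
  rootsLen : U.roots.length = L
  perimLen : U.perimEdges.length = L
  rootsSize : ∀ i, i < L → 2 ≤ (U.roots.getD i []).length
  count : numPM U.G = 2 ^ c * numPM G0
  spokesFree : ∀ M : U.G.Subgraph, M.IsPerfectMatching → ∀ e ∈ U.spokes, e ∉ M.edgeSet
  perimHalf : ∀ i, ∀ e ∈ U.perimEdges.getD i ∅,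
    {M : U.G.Subgraph | M.IsPerfectMatching ∧ e ∈ M.edgeSet}.ncard * 2 = numPM U.G

end state

section step
open Sum

lemma altInv_step {V0 : Type} {G0 : SimpleGraph V0} {L c : ℕ} {U : AltState} {i : ℕ}
    (hi : i < L) (h : AltInv G0 L c U) : AltInv G0 L (c+1) (altanAt U i) := by
  have hr : 2 ≤ (U.roots.getD i []).length := h.rootsSize i hi
  have hiU : i < U.roots.length := h.rootsLen ▸ hi
  have hiP : i < U.perimEdges.length := h.perimLen ▸ hi
  constructor
  · show ((U.roots.map (List.map Sum.inl)).set i _).length = L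
    simp [h.rootsLen]
  · show ((U.perimEdges.map _).set i _).length = L
    exact (List.length_set ..).trans ((List.length_map ..).trans h.perimLen)
  · -- roots sizes
    intro j hj
    show 2 ≤ (((U.roots.map (List.map Sum.inl)).set i _).getD j []).length
    by_cases hij : j = i
    · subst hij
      rw [getD_set_self _ _ _ _ (by simpa [h.rootsLen] using hj)]
      simpa using hr
    · rw [getD_set_ne _ _ _ _ _ hij]
      rw [show ([] : List (U.V ⊕ ZMod (2 * (U.roots.getD i []).length)))
            = List.map Sum.inl [] from rfl,
        getD_map' _ _ _ _ (h.rootsLen ▸ hj)]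
      simpa using h.rootsSize j hj
  · -- counting
    show numPM (altanG U.G (U.roots.getD i [])) = 2 ^ (c+1) * numPM G0
    rw [numPM_altan hr, h.count, pow_succ]
    ring
  · -- spokes
    intro M hM e he hin
    rcases he with ⟨e', he', rfl⟩ | ⟨j, rfl⟩
    · exact h.spokesFree (restrict M) (restrict_pm hr hM) e' he'
        ((inl_edge_mem M e').mp hin)
    · exact no_spoke_edge hr hM _ _ hin
  · -- perimeter halving
    intro j e he
    change Sym2 (U.V ⊕ ZMod (2 * (U.roots.getD i []).length)) at e
    change e ∈ @List.getD (Set (Sym2 (U.V ⊕ ZMod (2 * (U.roots.getD i []).length))))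
      (altanAt U i).perimEdges j ∅ at he
    show {M : (altanG U.G (U.roots.getD i [])).Subgraph |
        M.IsPerfectMatching ∧ e ∈ M.edgeSet}.ncard * 2
      = numPM (altanG U.G (U.roots.getD i []))
    rw [numPM_altan hr]
    by_cases hij : j = i
    · subst hij
      rw [show (altanAt U j).perimEdges
            = (U.perimEdges.map (Set.image (Sym2.map Sum.inl))).set j
              {e | ∃ z : ZMod (2 * (U.roots.getD j []).length),
                e = s((Sum.inr z : U.V ⊕ _), Sum.inr (z + 1))} from rfl,
        getD_set_self _ _ _ _ (by simpa [h.perimLen] using hiP)] at he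
      obtain ⟨z, rfl⟩ := he
      rw [numPM_altan_perim hr z]
      ring
    · rw [show (altanAt U i).perimEdges
            = (U.perimEdges.map (Set.image (Sym2.map Sum.inl))).set i _ from rfl,
        getD_set_ne _ _ _ _ _ hij] at he
      by_cases hjP : j < U.perimEdges.length
      · rw [show (∅ : Set (Sym2 (U.V ⊕ ZMod (2 * (U.roots.getD i []).length))))
              = Set.image (Sym2.map Sum.inl) ∅ by simp,
          getD_map' _ _ _ _ hjP] at he
        obtain ⟨e', he', rfl⟩ := he
        rw [numPM_altan_inl_edge hr e']
        have := h.perimHalf j e' he'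
        omega
      · rw [List.getD_eq_default (U.perimEdges.map (Set.image (Sym2.map Sum.inl))) _
          (by simpa using not_lt.mp hjP)] at he
        exact absurd he (Set.notMem_empty e)
end step

lemma altInv_applyTimes {V0 : Type} {G0 : SimpleGraph V0} {L c : ℕ} {U : AltState} {i : ℕ}
    (hi : i < L) (h : AltInv G0 L c U) (m : ℕ) :
    AltInv G0 L (c + m) (applyTimes U i m) := by
  induction m with
  | zero => exact h
  | succ m ih => exact altInv_step hi ih

lemma altInv_foldl {V0 : Type} {G0 : SimpleGraph V0} {L : ℕ} (n : List ℕ)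
    (l : List ℕ) (hl : ∀ j ∈ l, j < L) {c : ℕ} {U : AltState} (h : AltInv G0 L c U) :
    AltInv G0 L (c + (l.map (fun i => n.getD i 0)).sum)
      (l.foldl (fun T i => applyTimes T i (n.getD i 0)) U) := by
  induction l generalizing c U with
  | nil => simpa using h
  | cons a l ih =>
    simp only [List.foldl_cons, List.map_cons, List.sum_cons]
    have := ih (fun j hj => hl j (List.mem_cons_of_mem a hj))
      (altInv_applyTimes (hl a (List.mem_cons_self (a := a) (l := l))) h (n.getD a 0))
    rw [add_assoc] at this
    exact this

lemma range_map_getD_sum (n : List ℕ) :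
    ((List.range n.length).map (fun i => n.getD i 0)).sum = n.sum := by
  induction n with
  | nil => simp
  | cons a l ih =>
    rw [List.length_cons, List.range_succ_eq_map]
    simp only [List.map_cons, List.map_map, List.sum_cons, List.getD_cons_zero,
      Function.comp_def, List.getD_cons_succ]
    rw [ih]

/-- if `G` has `K` perfect matchings then the iterated generalised altan
`A^n(G)` has `2^|n| * K` perfect matchings; no spoke lies in any perfect matching; and if
`n i > 0` then each edge of the `i`-th new perimeter lies in exactly half of them. -/
theorem stmt19 (V : Type) [Fintype V] [DecidableEq V]
    (G : SimpleGraph V) [DecidableRel G.Adj]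
    (roots : List (List V)) (n : List ℕ) (hlen : n.length = roots.length)
    -- admissibility: each `roots i` is the cyclic list of degree-2 vertices of a cycle
    -- `C i` of `G`, containing at least two of them
    (hadm : ∀ i (hi : i < roots.length),
      2 ≤ (roots.get ⟨i, hi⟩).length ∧
      (roots.get ⟨i, hi⟩).Nodup ∧
      (∀ v ∈ roots.get ⟨i, hi⟩, G.degree v = 2) ∧
      ∃ (v : V) (c : G.Walk v v), c.IsCycle ∧
        (roots.get ⟨i, hi⟩).IsRotated
          (c.support.tail.filter (fun u => decide (G.degree u = 2))))
    -- each degree-2 vertex of `G` lies on at most one of the cycles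
    (hdisj : ∀ i j (hi : i < roots.length) (hj : j < roots.length), i ≠ j →
      ∀ v ∈ roots.get ⟨i, hi⟩, v ∉ roots.get ⟨j, hj⟩) :
    let S : AltState := ⟨V, G, roots, ∅, roots.map fun _ => (∅ : Set (Sym2 V))⟩
    let T : AltState := iterAltan S n
    numPM T.G = 2 ^ n.sum * numPM G ∧
    (∀ M : T.G.Subgraph, M.IsPerfectMatching → ∀ e ∈ T.spokes, e ∉ M.edgeSet) ∧
    (∀ i, i < n.length → 0 < n.getD i 0 → ∀ e ∈ T.perimEdges.getD i ∅,
      {M : T.G.Subgraph | M.IsPerfectMatching ∧ e ∈ M.edgeSet}.ncard * 2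
        = numPM T.G) := by
  intro S T
  have h0 : AltInv G roots.length 0 S := by
    constructor
    · rfl
    · exact List.length_map _
    · intro i hi
      rw [List.getD_eq_getElem _ _ hi]
      exact (hadm i hi).1
    · simp [S]
    · intro M hM e he
      exact absurd he (Set.notMem_empty e)
    · intro i e he
      exfalso
      have hz : S.perimEdges.getD i ∅ = (∅ : Set (Sym2 V)) := by
        by_cases hi : i < roots.length
        · show ((roots.map fun _ => (∅ : Set (Sym2 V))).getD i ∅) = ∅
          rw [show (∅ : Set (Sym2 V)) = (fun _ : List V => (∅ : Set (Sym2 V))) [] from rfl]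
          rw [getD_map' roots _ i [] hi]
        · show ((roots.map fun _ => (∅ : Set (Sym2 V))).getD i ∅) = ∅
          rw [List.getD_eq_default _ _ (by simpa using not_lt.mp hi)]
      rw [hz] at he
      exact absurd he (Set.notMem_empty e)
  have hT : AltInv G roots.length (0 + ((List.range n.length).map
      (fun i => n.getD i 0)).sum) T := by
    apply altInv_foldl
    · intro j hj
      rw [← hlen]
      exact List.mem_range.mp hj
    · exact h0
  rw [range_map_getD_sum, Nat.zero_add] at hT
  exact ⟨hT.count, hT.spokesFree, fun i _ _ e he => hT.perimHalf i e he⟩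
end
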